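/- Let G be a simple graph, Y an induced subgraph, and suppose a group Γ acts on G by automorphisms with a symmetric generating set S. If there exists k ≥ 1 such that s·V(Y) ⊆ V(Y^k) for every s ∈ S, then for every γ ∈ Γ and every vertex v ∈ V(Y), γ·v ∈ V(Y^ω). Consequently the orbit Γ·V(Y) is contained in V(Y^ω). -/

import Mathlib

def UniqDet {V : Type*} (G : SimpleGraph V) (A : Set V) (v : V) : Prop :=
  (∀ a ∈ A, G.Adj a v) ∧ ∀ w, (∀ a ∈ A, G.Adj a w) → w = v

def rigidExpand {V : Type*} (G : SimpleGraph V) (Y : Set V) : Set V :=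
  Y ∪ {v | ∃ A ⊆ Y, UniqDet G A v}

def rigidIter {V : Type*} (G : SimpleGraph V) (Y : Set V) : ℕ → Set V
  | 0 => Y
  | n + 1 => rigidExpand G (rigidIter G Y n)

def rigidOmega {V : Type*} (G : SimpleGraph V) (Y : Set V) : Set V :=
  ⋃ n, rigidIter G Y n

def MaxClique {V : Type*} (G : SimpleGraph V) (s : Set V) : Prop :=
  G.IsClique s ∧ ∀ t, G.IsClique t → s ⊆ t → s = t

lemma image_iter_subset {V : Type*} (G : SimpleGraph V) (Y : Set V)
    (e : Equiv.Perm V) (hadj : ∀ u v, G.Adj u v ↔ G.Adj (e u) (e v))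
    (n : ℕ) (he : ⇑e '' Y ⊆ rigidIter G Y n) :
    ∀ m, ⇑e '' rigidIter G Y m ⊆ rigidIter G Y (n + m) := by
  intro m
  induction m with
  | zero => simpa [rigidIter] using he
  | succ m ih =>
    rintro _ ⟨v, hv, rfl⟩
    rcases hv with hv | ⟨A, hA, hdet⟩
    · exact Set.subset_union_left (ih ⟨v, hv, rfl⟩)
    · right
      refine ⟨⇑e '' A, fun x hx => ih (Set.image_mono hA hx), ?_, ?_⟩
      · rintro _ ⟨a, ha, rfl⟩
        exact (hadj a v).mp (hdet.1 a ha)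
      · intro w hw
        have : e.symm w = v := by
          apply hdet.2
          intro a ha
          have := hw (e a) ⟨a, ha, rfl⟩
          rwa [hadj a (e.symm w), e.apply_symm_apply]
        rw [← this, e.apply_symm_apply]

theorem orbit_subset_omega {V Γ : Type*} [Group Γ] (G : SimpleGraph V) (Y : Set V)
    (ρ : Γ →* Equiv.Perm V)
    (hadj : ∀ (γ : Γ) (u v : V), G.Adj u v ↔ G.Adj (ρ γ u) (ρ γ v))
    (S : Set Γ) (hsym : S⁻¹ = S) (hgen : Subgroup.closure S = ⊤)
    (k : ℕ) (hk : 1 ≤ k) (hS : ∀ s ∈ S, ⇑(ρ s) '' Y ⊆ rigidIter G Y k) :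
    ∀ (γ : Γ), ∀ v ∈ Y, ρ γ v ∈ rigidOmega G Y := by
  have key : ∀ γ : Γ, ∃ n, ⇑(ρ γ) '' Y ⊆ rigidIter G Y n ∧
      ⇑(ρ γ⁻¹) '' Y ⊆ rigidIter G Y n := by
    intro γ
    have hγ : γ ∈ Subgroup.closure S := hgen ▸ Subgroup.mem_top γ
    induction hγ using Subgroup.closure_induction with
    | mem s hs =>
      refine ⟨k, hS s hs, hS s⁻¹ ?_⟩
      rw [← hsym]; exact Set.inv_mem_inv.mpr hs
    | one =>
      refine ⟨0, ?_, ?_⟩ <;> simp [rigidIter]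
    | mul x y hx hy ihx ihy =>
      obtain ⟨n, hx1, hx2⟩ := ihx
      obtain ⟨m, hy1, hy2⟩ := ihy
      refine ⟨n + m, ?_, ?_⟩
      · have : ⇑(ρ (x * y)) '' Y = ⇑(ρ x) '' (⇑(ρ y) '' Y) := by
          rw [← Set.image_comp, map_mul]; rfl
        rw [this]
        exact (Set.image_mono hy1).trans
          (image_iter_subset G Y (ρ x) (hadj x) n hx1 m)
      · have : ⇑(ρ ((x * y)⁻¹)) '' Y = ⇑(ρ y⁻¹) '' (⇑(ρ x⁻¹) '' Y) := by
          rw [← Set.image_comp, mul_inv_rev, map_mul]; rfl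
        rw [this]
        have := (Set.image_mono hx2).trans
          (image_iter_subset G Y (ρ y⁻¹) (hadj y⁻¹) m hy2 n)
        exact this.trans (by rw [Nat.add_comm])
    | inv x hx ihx =>
      obtain ⟨n, h1, h2⟩ := ihx
      exact ⟨n, h2, by simpa using h1⟩
  intro γ v hv
  obtain ⟨n, h1, _⟩ := key γ
  exact Set.mem_iUnion.mpr ⟨n, h1 ⟨v, hv, rfl⟩⟩
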